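/- Let q be a prime power, m ≥ 2 an integer, and n = q^m − 1. Suppose m is even. For every integer x with 1 ≤ x < q^{m/2} − 1 whose q-ary expansion x = x_0 + x_1 q + ⋯ + x_{m−1} q^{m−1} (with 0 ≤ x_i < q) satisfies x_i = 0 for all i ≥ m/2, every element y of the q-ary cyclotomic coset of n − x modulo n satisfies y ≥ q^{m/2} − 1. -/

import Mathlib

/-- The `q`-ary cyclotomic coset of `x` modulo `n`: `{x q^k mod n : k ≥ 0}`. -/
def cycCoset (q n x : ℕ) : Set ℕ := {y | ∃ k : ℕ, y = x * q ^ k % n}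

/-- `q^(h+h) ≡ 1` modulo `q^(h+h) - 1`. -/
lemma aux_pow_modEq_one (q h : ℕ) (hq : 2 ≤ q) (hh : 1 ≤ h) :
    q ^ (h + h) ≡ 1 [MOD q ^ (h + h) - 1] := by
  have h1 : 1 ≤ q ^ (h + h) := Nat.one_le_pow _ _ (by omega)
  exact ((Nat.modEq_iff_dvd' h1).2 dvd_rfl).symm

/-- Key bound: for `x ≤ q^h - 2`, any shift `x q^j mod (q^(h+h)-1)` with `j < h+h`
is at most `q^(h+h) - q^h`. -/
lemma aux_shift_bound (q h : ℕ) (hq : 2 ≤ q) (hh : 1 ≤ h)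
    (x : ℕ) (hx2 : x + 2 ≤ q ^ h) (j : ℕ) (hj : j < h + h) :
    x * q ^ j % (q ^ (h + h) - 1) ≤ q ^ (h + h) - q ^ h := by
  have hqh : 2 ≤ q ^ h := le_trans (by simpa using Nat.pow_le_pow_left hq 1)
      (Nat.pow_le_pow_right (by omega) hh)
  have hpow : q ^ (h + h) = q ^ h * q ^ h := pow_add q h h
  have hmul : 2 * q ^ h ≤ q ^ h * q ^ h := Nat.mul_le_mul_right _ hqh
  by_cases hcase : j ≤ h
  · -- low shift: x * q^j is reduced already
    have h1 : x * q ^ j ≤ (q ^ h - 2) * q ^ h :=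
      Nat.mul_le_mul (by omega) (Nat.pow_le_pow_right (by omega) hcase)
    have h2 : (q ^ h - 2) * q ^ h = q ^ h * q ^ h - 2 * q ^ h := Nat.sub_mul _ _ _
    have hlt : x * q ^ j < q ^ (h + h) - 1 := by omega
    rw [Nat.mod_eq_of_lt hlt]
    omega
  · -- high shift: split x = (x / q^t) q^t + x % q^t with t = h+h-j
    push_neg at hcase
    set t := h + h - j with ht
    have htj : t + j = h + h := by omega
    have htpos : 0 < q ^ t := Nat.pow_pos (by omega)
    have hsplit : x * q ^ j = (x / q ^ t) * q ^ (h + h) + (x % q ^ t) * q ^ j := by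
      have hdm := Nat.div_add_mod x (q ^ t)
      calc x * q ^ j = (q ^ t * (x / q ^ t) + x % q ^ t) * q ^ j := by rw [hdm]
        _ = (x / q ^ t) * (q ^ t * q ^ j) + (x % q ^ t) * q ^ j := by ring
        _ = (x / q ^ t) * q ^ (h + h) + (x % q ^ t) * q ^ j := by
            rw [← pow_add, htj]
    have hA : x / q ^ t ≤ q ^ h - 2 := le_trans (Nat.div_le_self _ _) (by omega)
    have hBlt : x % q ^ t < q ^ t := Nat.mod_lt _ htpos
    have hB2 : (x % q ^ t) * q ^ j + q ^ j ≤ q ^ (h + h) := by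
      have h1 : (x % q ^ t + 1) * q ^ j ≤ q ^ t * q ^ j :=
        Nat.mul_le_mul_right _ (by omega)
      rw [add_mul, one_mul] at h1
      rwa [← pow_add, htj] at h1
    have hqj : 2 * q ^ h ≤ q ^ j := by
      calc 2 * q ^ h ≤ q * q ^ h := Nat.mul_le_mul_right _ hq
        _ = q ^ (h + 1) := by ring
        _ ≤ q ^ j := Nat.pow_le_pow_right (by omega) (by omega)
    -- the reduced value is A + B
    have h1 : 1 ≤ q ^ (h + h) := Nat.one_le_pow _ _ (by omega)
    have hcong : x * q ^ j ≡ x / q ^ t + (x % q ^ t) * q ^ j [MOD q ^ (h + h) - 1] := by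
      rw [hsplit]
      exact Nat.ModEq.add_right _
        (by simpa using (aux_pow_modEq_one q h hq hh).mul_left (x / q ^ t))
    have hsum_lt : x / q ^ t + (x % q ^ t) * q ^ j < q ^ (h + h) - 1 := by omega
    unfold Nat.ModEq at hcong
    rw [hcong, Nat.mod_eq_of_lt hsum_lt]
    omega

/-- `x q^k mod (q^(h+h)-1)` is nonzero when `1 ≤ x < q^(h+h)-1`. -/
lemma aux_mod_pos (q h : ℕ) (hq : 2 ≤ q) (hh : 1 ≤ h)
    (x : ℕ) (hx1 : 1 ≤ x) (hxn : x < q ^ (h + h) - 1) (k : ℕ) :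
    1 ≤ x * q ^ k % (q ^ (h + h) - 1) := by
  set n := q ^ (h + h) - 1 with hn
  have h1 : 1 ≤ q ^ (h + h) := Nat.one_le_pow _ _ (by omega)
  have hcop : Nat.Coprime q n := by
    have hdvd : q ∣ n + 1 := by
      have : n + 1 = q ^ (h + h) := by omega
      rw [this]
      exact dvd_pow_self q (by omega)
    have hsucc : Nat.Coprime (n + 1) n := by
      have := Nat.coprime_add_self_left.2 (Nat.coprime_one_left n)
      simpa [Nat.add_comm] using this
    exact Nat.Coprime.coprime_dvd_left hdvd hsucc
  by_contra hcon
  have hz : x * q ^ k % n = 0 := by omega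
  have hdvd : n ∣ x * q ^ k := Nat.dvd_of_mod_eq_zero hz
  have : n ∣ x := (Nat.Coprime.pow_right k hcop.symm).dvd_of_dvd_mul_right hdvd
  have := Nat.le_of_dvd (by omega) this
  omega

/-- Even-`m` case (step 3a of the paper's Theorem 2): for `n = q^m - 1` with
`m ≥ 2` even, and `1 ≤ x < q^{m/2} - 1` whose `q`-ary digits `x_i = x / q^i % q`
vanish for `i ≥ m/2`, every element of the `q`-ary cyclotomic coset of `n - x`
is at least `q^{m/2} - 1`. -/
theorem cycCoset_neg_min_even
    (q m : ℕ) (hq : IsPrimePow q) (hm : 2 ≤ m) (hme : Even m)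
    (x : ℕ) (hx1 : 1 ≤ x) (hx2 : x < q ^ (m / 2) - 1)
    (hdigits : ∀ i : ℕ, m / 2 ≤ i → x / q ^ i % q = 0) :
    ∀ y ∈ cycCoset q (q ^ m - 1) (q ^ m - 1 - x), q ^ (m / 2) - 1 ≤ y := by
  obtain ⟨h, rfl⟩ := hme
  have hq2 : 2 ≤ q := hq.two_le
  have hh : 1 ≤ h := by omega
  have hhd : (h + h) / 2 = h := by omega
  rw [hhd] at hx2 ⊢
  rintro y ⟨k, rfl⟩
  set n := q ^ (h + h) - 1 with hn
  have hqh : 2 ≤ q ^ h := le_trans (by simpa using Nat.pow_le_pow_left hq2 1)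
      (Nat.pow_le_pow_right (by omega) hh)
  have hpow : q ^ (h + h) = q ^ h * q ^ h := pow_add q h h
  have hmul : 2 * q ^ h ≤ q ^ h * q ^ h := Nat.mul_le_mul_right _ hqh
  have hxn : x < n := by omega
  have hnpos : 0 < n := by omega
  -- reduce the exponent modulo h + h
  set j := k % (h + h) with hj
  have hjlt : j < h + h := Nat.mod_lt _ (by omega)
  have hper : ∀ z : ℕ, z * q ^ k % n = z * q ^ j % n := by
    intro z
    have hcong : q ^ k ≡ q ^ j [MOD n] := by
      conv_lhs => rw [← Nat.div_add_mod k (h + h)]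
      rw [pow_add, pow_mul, ← hj]
      calc (q ^ (h + h)) ^ (k / (h + h)) * q ^ j
          ≡ 1 ^ (k / (h + h)) * q ^ j [MOD n] :=
            ((aux_pow_modEq_one q h hq2 hh).pow _).mul_right _
        _ = q ^ j := by rw [one_pow, one_mul]
    have := hcong.mul_left z
    unfold Nat.ModEq at this
    exact this
  -- set a, b and show a + b = n
  set b := x * q ^ k % n with hb
  set a := (n - x) * q ^ k % n with ha
  have hbpos : 1 ≤ b := aux_mod_pos q h hq2 hh x hx1 hxn k
  have hbub : b ≤ q ^ (h + h) - q ^ h := by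
    rw [hb, hper x]
    exact aux_shift_bound q h hq2 hh x (by omega) j hjlt
  have halt : a < n := Nat.mod_lt _ hnpos
  have hblt : b < n := Nat.mod_lt _ hnpos
  have hsum : (a + b) % n = 0 := by
    rw [ha, hb, ← Nat.add_mod, ← add_mul, Nat.sub_add_cancel hxn.le]
    exact Nat.mul_mod_right n _
  have hdvd : n ∣ a + b := Nat.dvd_of_mod_eq_zero hsum
  have hab : a + b = n := by
    rcases hdvd with ⟨c, hc⟩
    rcases Nat.lt_or_ge c 1 with h' | h'
    · have : c = 0 := by omega
      subst this
      simp at hc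
      omega
    rcases Nat.lt_or_ge c 2 with h2' | h2'
    · have : c = 1 := by omega
      subst this
      simpa using hc
    · have h2n : n * 2 ≤ n * c := Nat.mul_le_mul_left n h2'
      omega
  omega
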